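/- arXiv:1410.3447 — 2 statements merged into one kernel-verified Lean document; each statement's English description precedes it below -/
import Mathlib

section
/- Let F : [0,T] → ℝ^{n×n} and Q : [0,T] → ℝ^{n×n} be continuous, with Q(t) symmetric positive semidefinite for every t ∈ [0,T]. Suppose Σ : [0,T] → ℝ^{n×n} is differentiable, symmetric-matrix valued, satisfies Σ̇(t) = F(t)Σ(t) + Σ(t)F(t)ᵀ + Q(t) for all t ∈ [0,T], and Σ(0) is positive definite. Then Σ(t) is positive definite for every t ∈ [0,T]. -/
open Matrix

noncomputable def detCM (n : ℕ) : ContinuousMultilinearMap ℝ (fun _ : Fin n => (Fin n → ℝ)) ℝ :=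
  MultilinearMap.mkContinuous
    (Matrix.detRowAlternating (R := ℝ) (n := Fin n)).toMultilinearMap
    ((Finset.univ : Finset (Equiv.Perm (Fin n))).card) (by
      intro m
      show ‖(Matrix.of m).det‖ ≤ _
      rw [Matrix.det_apply, Real.norm_eq_abs]
      calc |∑ σ : Equiv.Perm (Fin n), Equiv.Perm.sign σ • ∏ i, Matrix.of m (σ i) i|
          ≤ ∑ σ : Equiv.Perm (Fin n), |Equiv.Perm.sign σ • ∏ i, Matrix.of m (σ i) i| :=
            Finset.abs_sum_le_sum_abs _ _
        _ ≤ ∑ _σ : Equiv.Perm (Fin n), ∏ i, ‖m i‖ := by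
            apply Finset.sum_le_sum
            intro σ _
            have h1 : |Equiv.Perm.sign σ • ∏ i, Matrix.of m (σ i) i|
                = |∏ i, Matrix.of m (σ i) i| := by
              rcases Int.units_eq_one_or (Equiv.Perm.sign σ) with h | h <;> simp [h]
            rw [h1, Finset.abs_prod]
            have h2 : ∏ i, |Matrix.of m (σ i) i| = ∏ i, |m i (σ⁻¹ i)| := by
              rw [← Equiv.prod_comp σ (fun j => |m j (σ⁻¹ j)|)]
              simp
            rw [h2]
            apply Finset.prod_le_prod (fun i _ => abs_nonneg _)
            intro i _
            simpa using norm_le_pi_norm (m i) (σ⁻¹ i)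
        _ = _ := by rw [Finset.sum_const, nsmul_eq_mul]
      )

theorem sum_det_updateRow {n : ℕ} (A B : Matrix (Fin n) (Fin n) ℝ) :
    ∑ i, (A.updateRow i (B i)).det = (Matrix.adjugate A * B).trace := by
  have key : ∀ i, (A.updateRow i (B i)).det = ∑ j, B i j * Matrix.adjugate A j i := by
    intro i
    rw [← Matrix.cramer_transpose_apply]
    have hB : (B i) = ∑ j, B i j • (Pi.single j 1 : Fin n → ℝ) := by
      funext k
      simp [Pi.single_apply]
    conv_lhs => rw [hB]
    rw [map_sum, Finset.sum_apply]
    refine Finset.sum_congr rfl fun j _ => ?_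
    rw [LinearMap.map_smul, Pi.smul_apply, smul_eq_mul]
    congr 1
  simp only [key, Matrix.trace, Matrix.diag, Matrix.mul_apply]
  rw [Finset.sum_comm]
  congr 1; funext i
  congr 1; funext j
  ring

theorem hasDerivAt_det {n : ℕ} {M : ℝ → Matrix (Fin n) (Fin n) ℝ}
    {M' : Matrix (Fin n) (Fin n) ℝ} {t : ℝ}
    (h : ∀ i j, HasDerivAt (fun s => M s i j) (M' i j) t) :
    HasDerivAt (fun s => (M s).det) ((Matrix.adjugate (M t) * M').trace) t := by
  have hc : HasDerivAt (fun s => (fun i => M s i : Fin n → Fin n → ℝ))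
      (fun i => M' i) t :=
    hasDerivAt_pi.2 fun i => hasDerivAt_pi.2 fun j => h i j
  have hf := (detCM n).hasFDerivAt (x := fun i => M t i)
  have H := hf.comp_hasDerivAt t hc
  have e1 : (fun s => detCM n (fun i => M s i)) = fun s => (M s).det := by
    funext s
    show (Matrix.detRowAlternating (R := ℝ) (n := Fin n)).toMultilinearMap (fun i => M s i)
      = (M s).det
    rfl
  have e2 : (detCM n).linearDeriv (fun i => M t i) (fun i => M' i)
      = (Matrix.adjugate (M t) * M').trace := by
    rw [ContinuousMultilinearMap.linearDeriv_apply, ← sum_det_updateRow (M t) M']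
    refine Finset.sum_congr rfl fun i _ => ?_
    show (Matrix.detRowAlternating (R := ℝ) (n := Fin n)).toMultilinearMap _ = _
    congr 1
  rw [e2] at H
  have H2 : HasDerivAt (fun s => detCM n (fun i => M s i)) (((M t).adjugate * M').trace) t := H
  rw [e1] at H2
  exact H2

lemma psd_trace_nonneg {n : ℕ} {M : Matrix (Fin n) (Fin n) ℝ} (hM : M.PosSemidef) :
    0 ≤ M.trace := by
  rw [Matrix.trace]
  refine Finset.sum_nonneg fun i _ => ?_
  have := hM.dotProduct_mulVec_nonneg (Pi.single i 1)
  simpa [Matrix.mulVec_single, dotProduct, Pi.single_apply] using this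

lemma trace_mul_psd_nonneg {n : ℕ} {A B : Matrix (Fin n) (Fin n) ℝ}
    (hA : A.PosSemidef) (hB : B.PosSemidef) : 0 ≤ (A * B).trace := by
  obtain ⟨C, rfl⟩ : ∃ C : Matrix (Fin n) (Fin n) ℝ, A = Cᴴ * C := by
    classical
    open scoped MatrixOrder in exact CStarAlgebra.nonneg_iff_eq_star_mul_self.mp hA.nonneg
  have h1 : (Cᴴ * C * B).trace = (C * B * Cᴴ).trace := by
    rw [Matrix.mul_assoc, Matrix.trace_mul_comm, Matrix.mul_assoc]
  rw [h1]
  exact psd_trace_nonneg (hB.mul_mul_conjTranspose_same C)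

lemma quad_lower_bound {n : ℕ} {M : Matrix (Fin n) (Fin n) ℝ} (hM : M.PosDef) :
    ∃ ε > 0, ∀ x : Fin n → ℝ, ε * (x ⬝ᵥ x) ≤ x ⬝ᵥ M.mulVec x := by
  rcases Nat.eq_zero_or_pos n with hn | hn
  · refine ⟨1, one_pos, fun x => ?_⟩
    subst hn
    simp [dotProduct]
  · have hq : Continuous fun x : Fin n → ℝ => x ⬝ᵥ M.mulVec x := by
      simp only [dotProduct, Matrix.mulVec]
      exact continuous_finset_sum _ fun i _ => (continuous_apply i).mul
        (continuous_finset_sum _ fun j _ => continuous_const.mul (continuous_apply j))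
    have hnt : Nontrivial (Fin n → ℝ) := by
      have : NeZero n := ⟨hn.ne'⟩
      infer_instance
    have hsph : (Metric.sphere (0 : Fin n → ℝ) 1).Nonempty :=
      NormedSpace.sphere_nonempty.mpr zero_le_one
    obtain ⟨u, hu, humin⟩ := (isCompact_sphere (0 : Fin n → ℝ) 1).exists_isMinOn hsph
      hq.continuousOn
    have hune : u ≠ 0 := by
      intro h
      rw [h] at hu
      simp at hu
    set ε₀ := u ⬝ᵥ M.mulVec u with hε₀
    have hε₀pos : 0 < ε₀ := by
      have := hM.dotProduct_mulVec_pos hune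
      simpa using this
    refine ⟨ε₀ / n, by positivity, fun x => ?_⟩
    rcases eq_or_ne x 0 with rfl | hx
    · simp
    · have hxn : ‖x‖ ≠ 0 := norm_ne_zero_iff.mpr hx
      set v := ‖x‖⁻¹ • x with hv
      have hvs : v ∈ Metric.sphere (0 : Fin n → ℝ) 1 := by
        simp [hv, norm_smul, abs_of_nonneg (inv_nonneg.mpr (norm_nonneg x)),
          inv_mul_cancel₀ hxn]
      have hqv : ε₀ ≤ v ⬝ᵥ M.mulVec v := humin hvs
      have hqvx : v ⬝ᵥ M.mulVec v = (‖x‖⁻¹)^2 * (x ⬝ᵥ M.mulVec x) := by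
        simp [hv, Matrix.mulVec_smul, smul_dotProduct, dotProduct_smul,
          smul_eq_mul]
        ring
      have hdot : x ⬝ᵥ x ≤ n * ‖x‖^2 := by
        rw [dotProduct]
        calc ∑ i, x i * x i ≤ ∑ _i : Fin n, ‖x‖^2 := by
              refine Finset.sum_le_sum fun i _ => ?_
              have := norm_le_pi_norm x i
              calc x i * x i = |x i|^2 := by rw [sq_abs]; ring
                _ ≤ ‖x‖^2 := by
                    apply pow_le_pow_left₀ (abs_nonneg _)
                    simpa using this
          _ = n * ‖x‖^2 := by rw [Finset.sum_const]; simp [nsmul_eq_mul]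
      have hq2 : ε₀ * ‖x‖^2 ≤ x ⬝ᵥ M.mulVec x := by
        have := mul_le_mul_of_nonneg_right hqv (le_of_lt (by positivity : (0:ℝ) < ‖x‖^2))
        calc ε₀ * ‖x‖^2 ≤ (v ⬝ᵥ M.mulVec v) * ‖x‖^2 := this
          _ = x ⬝ᵥ M.mulVec x := by
              rw [hqvx]
              field_simp
      calc ε₀ / n * (x ⬝ᵥ x) ≤ ε₀ / n * (n * ‖x‖^2) := by
            apply mul_le_mul_of_nonneg_left hdot
            positivity
        _ = ε₀ * ‖x‖^2 := by
            field_simp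
        _ ≤ x ⬝ᵥ M.mulVec x := hq2

lemma quad_perturb {n : ℕ} (D : Matrix (Fin n) (Fin n) ℝ) (x : Fin n → ℝ) :
    |x ⬝ᵥ D.mulVec x| ≤ (∑ i, ∑ j, |D i j|) * (x ⬝ᵥ x) := by
  have hxx : ∀ i j : Fin n, |x i| * |x j| ≤ x ⬝ᵥ x := by
    intro i j
    have h1 : |x i| * |x j| ≤ (x i^2 + x j^2)/2 := by
      nlinarith [sq_nonneg (|x i| - |x j|), sq_abs (x i), sq_abs (x j)]
    have h2 : x i ^ 2 ≤ x ⬝ᵥ x := by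
      rw [dotProduct]
      have : x i * x i = x i ^2 := by ring
      rw [← this]
      exact Finset.single_le_sum (f := fun k => x k * x k)
        (fun k _ => mul_self_nonneg _) (Finset.mem_univ i)
    have h3 : x j ^ 2 ≤ x ⬝ᵥ x := by
      rw [dotProduct]
      have : x j * x j = x j ^2 := by ring
      rw [← this]
      exact Finset.single_le_sum (f := fun k => x k * x k)
        (fun k _ => mul_self_nonneg _) (Finset.mem_univ j)
    linarith
  calc |x ⬝ᵥ D.mulVec x| = |∑ i, ∑ j, x i * D i j * x j| := by
        simp only [dotProduct, Matrix.mulVec]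
        congr 1
        refine Finset.sum_congr rfl fun i _ => ?_
        rw [Finset.mul_sum]
        refine Finset.sum_congr rfl fun j _ => ?_
        show x i * (D i j * x j) = _
        ring
    _ ≤ ∑ i, |∑ j, x i * D i j * x j| := Finset.abs_sum_le_sum_abs _ _
    _ ≤ ∑ i, ∑ j, |x i * D i j * x j| :=
        Finset.sum_le_sum fun i _ => Finset.abs_sum_le_sum_abs _ _
    _ ≤ ∑ i, ∑ j, |D i j| * (x ⬝ᵥ x) := by
        refine Finset.sum_le_sum fun i _ => Finset.sum_le_sum fun j _ => ?_
        rw [abs_mul, abs_mul]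
        calc |x i| * |D i j| * |x j| = |D i j| * (|x i| * |x j|) := by ring
          _ ≤ |D i j| * (x ⬝ᵥ x) := by
              apply mul_le_mul_of_nonneg_left (hxx i j) (abs_nonneg _)
    _ = (∑ i, ∑ j, |D i j|) * (x ⬝ᵥ x) := by
        rw [Finset.sum_mul]
        refine Finset.sum_congr rfl fun i _ => ?_
        rw [Finset.sum_mul]

lemma trace_expand {n : ℕ} (A Fm Qm : Matrix (Fin n) (Fin n) ℝ) :
    (Matrix.adjugate A * (Fm * A + A * Fmᵀ + Qm)).trace
      = 2 * A.det * Fm.trace + (Matrix.adjugate A * Qm).trace := by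
  rw [Matrix.mul_add, Matrix.mul_add, Matrix.trace_add, Matrix.trace_add]
  have h1 : (Matrix.adjugate A * (Fm * A)).trace = A.det * Fm.trace := by
    rw [← Matrix.mul_assoc, Matrix.trace_mul_cycle, Matrix.mul_adjugate,
      Matrix.smul_mul, Matrix.one_mul, Matrix.trace_smul, smul_eq_mul]
  have h2 : (Matrix.adjugate A * (A * Fmᵀ)).trace = A.det * Fm.trace := by
    rw [← Matrix.mul_assoc, Matrix.adjugate_mul, Matrix.smul_mul, Matrix.one_mul,
      Matrix.trace_smul, smul_eq_mul, Matrix.trace_transpose]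
  rw [h1, h2]; ring

lemma trace_adj_psd {n : ℕ} {A Qm : Matrix (Fin n) (Fin n) ℝ}
    (hA : A.PosDef) (hQm : Qm.PosSemidef) : 0 ≤ (Matrix.adjugate A * Qm).trace := by
  have hadj : Matrix.adjugate A = A.det • A⁻¹ := by
    rw [Matrix.inv_def, Ring.inverse_eq_inv, smul_smul,
      mul_inv_cancel₀ hA.det_pos.ne', one_smul]
  rw [hadj, Matrix.smul_mul, Matrix.trace_smul, smul_eq_mul]
  exact mul_nonneg hA.det_pos.le (trace_mul_psd_nonneg hA.inv.posSemidef hQm)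

lemma psd_posdef_of_det {n : ℕ} {M : Matrix (Fin n) (Fin n) ℝ}
    (h : M.PosSemidef) (hdet : M.det ≠ 0) : M.PosDef := by
  refine Matrix.posDef_iff_dotProduct_mulVec.mpr ⟨h.1, fun x hx => ?_⟩
  rcases lt_or_eq_of_le (h.dotProduct_mulVec_nonneg x) with hlt | heq
  · exact hlt
  · exfalso
    have h0 : M *ᵥ x = 0 := (h.dotProduct_mulVec_zero_iff x).mp heq.symm
    exact hdet (Matrix.exists_mulVec_eq_zero_iff.mp ⟨x, hx, h0⟩)

lemma dot_self_pos {n : ℕ} {x : Fin n → ℝ} (hx : x ≠ 0) : 0 < x ⬝ᵥ x := by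
  obtain ⟨i, hi⟩ := Function.ne_iff.mp hx
  rw [dotProduct]
  refine Finset.sum_pos' (fun k _ => mul_self_nonneg _) ⟨i, Finset.mem_univ i, ?_⟩
  have : x i ≠ 0 := hi
  exact mul_self_pos.mpr this

lemma posDef_of_perturb {n : ℕ} {M N : Matrix (Fin n) (Fin n) ℝ} (hN : N.IsSymm)
    {ε : ℝ} (hε : ∀ x, ε * (x ⬝ᵥ x) ≤ x ⬝ᵥ M.mulVec x)
    (hclose : ∑ i, ∑ j, |N i j - M i j| < ε) : N.PosDef := by
  rw [Matrix.posDef_iff_dotProduct_mulVec]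
  constructor
  · rw [Matrix.IsHermitian, Matrix.conjTranspose_eq_transpose_of_trivial]
    exact hN
  · intro x hx
    have hxx : 0 < x ⬝ᵥ x := dot_self_pos hx
    have hsplit : x ⬝ᵥ N.mulVec x = x ⬝ᵥ M.mulVec x + x ⬝ᵥ (N - M).mulVec x := by
      rw [Matrix.sub_mulVec, dotProduct_sub]; ring
    have hper := quad_perturb (N - M) x
    have hsum : (∑ i, ∑ j, |(N - M) i j|) = ∑ i, ∑ j, |N i j - M i j| := by
      simp [Matrix.sub_apply]
    rw [hsum] at hper
    have h1 : -((∑ i, ∑ j, |N i j - M i j|) * (x ⬝ᵥ x)) ≤ x ⬝ᵥ (N - M).mulVec x :=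
      neg_le_of_abs_le hper
    have h2 := hε x
    have : 0 < x ⬝ᵥ N.mulVec x := by
      rw [hsplit]
      nlinarith
    simpa using this

/-- The controllability matrix `[B, AB, A²B, …, A^{n−1}B]` (columns indexed by `Fin n × Fin m`). -/
def ctrbMatrix {n m : ℕ} (A : Matrix (Fin n) (Fin n) ℝ) (B : Matrix (Fin n) (Fin m) ℝ) :
    Matrix (Fin n) (Fin n × Fin m) ℝ :=
  Matrix.of fun i p => ((A ^ (p.1 : ℕ)) * B) i p.2

/-- `(A,B)` is a controllable pair iff the controllability matrix has rank `n`. -/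
def IsControllablePair {n m : ℕ} (A : Matrix (Fin n) (Fin n) ℝ)
    (B : Matrix (Fin n) (Fin m) ℝ) : Prop :=
  (ctrbMatrix A B).rank = n

/-- A real square matrix is Hurwitz iff all its (complex) eigenvalues have negative real part. -/
def IsHurwitz {n : ℕ} (F : Matrix (Fin n) (Fin n) ℝ) : Prop :=
  ∀ μ ∈ spectrum ℂ (F.map (algebraMap ℝ ℂ)), μ.re < 0

/-- a symmetric solution of the Lyapunov differential equation
`Σ̇ = FΣ + ΣFᵀ + Q` with `Q(t) ⪰ 0` and `Σ(0) ≻ 0` stays positive definite on `[0,T]`. -/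
theorem stmt6 {n : ℕ} (T : ℝ)
    (F Q : ℝ → Matrix (Fin n) (Fin n) ℝ)
    (hF : ∀ i j, ContinuousOn (fun t => F t i j) (Set.Icc 0 T))
    (hQcont : ∀ i j, ContinuousOn (fun t => Q t i j) (Set.Icc 0 T))
    (hQ : ∀ t ∈ Set.Icc (0:ℝ) T, (Q t).PosSemidef)
    (S : ℝ → Matrix (Fin n) (Fin n) ℝ)
    (hSsym : ∀ t ∈ Set.Icc (0:ℝ) T, (S t).IsSymm)
    (hS : ∀ t ∈ Set.Icc (0:ℝ) T, ∀ i j, HasDerivAt (fun s => S s i j)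
      ((F t * S t + S t * (F t)ᵀ + Q t) i j) t)
    (h0 : (S 0).PosDef) :
    ∀ t ∈ Set.Icc (0:ℝ) T, (S t).PosDef := by
  classical
  intro t ht
  have hT : (0:ℝ) ≤ T := le_trans ht.1 ht.2
  have hherm : ∀ s ∈ Set.Icc (0:ℝ) T, (S s).IsHermitian := by
    intro s hs
    rw [Matrix.IsHermitian, Matrix.conjTranspose_eq_transpose_of_trivial]
    exact hSsym s hs
  -- bound on |trace F|
  have htrF : ContinuousOn (fun s => (F s).trace) (Set.Icc 0 T) := by
    have : (fun s => (F s).trace) = fun s => ∑ i, F s i i := rfl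
    rw [this]
    exact continuousOn_finset_sum _ fun i _ => hF i i
  obtain ⟨c₀, hc₀⟩ := isCompact_Icc.exists_bound_of_continuousOn htrF
  set c := max c₀ 0 with hcdef
  have hc : ∀ s ∈ Set.Icc (0:ℝ) T, |(F s).trace| ≤ c := fun s hs =>
    le_trans (by simpa using hc₀ s hs) (le_max_left _ _)
  have hcnn : (0:ℝ) ≤ c := le_max_right _ _
  -- derivative of det
  have hd : ∀ s ∈ Set.Icc (0:ℝ) T, HasDerivAt (fun r => (S r).det)
      ((Matrix.adjugate (S s) * (F s * S s + S s * (F s)ᵀ + Q s)).trace) s :=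
    fun s hs => hasDerivAt_det (fun i j => hS s hs i j)
  set G := {r : ℝ | r ∈ Set.Icc (0:ℝ) T ∧ ∀ s ∈ Set.Icc (0:ℝ) r, (S s).PosDef} with hGdef
  have hG0 : (0:ℝ) ∈ G := by
    refine ⟨⟨le_refl 0, hT⟩, fun s hs => ?_⟩
    have hs0 : s = 0 := le_antisymm hs.2 hs.1
    rwa [hs0]
  have hGbdd : BddAbove G := ⟨T, fun r hr => hr.1.2⟩
  have hGne : G.Nonempty := ⟨0, hG0⟩
  set τ := sSup G with hτdef
  have hτ0 : 0 ≤ τ := le_csSup hGbdd hG0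
  have hτT : τ ≤ T := csSup_le hGne fun r hr => hr.1.2
  have hτmem : τ ∈ Set.Icc (0:ℝ) T := ⟨hτ0, hτT⟩
  have hbelow : ∀ s, 0 ≤ s → s < τ → (S s).PosDef := by
    intro s hs0 hsτ
    obtain ⟨g, hgG, hsg⟩ := exists_lt_of_lt_csSup hGne hsτ
    exact hgG.2 s ⟨hs0, hsg.le⟩
  have hMc : ContinuousAt (fun s => S s) τ := by
    apply continuousAt_pi.2; intro i; apply continuousAt_pi.2; intro j
    exact (hS τ hτmem i j).continuousAt
  have hτPD : (S τ).PosDef := by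
    rcases eq_or_lt_of_le hτ0 with h0τ | h0τ
    · rw [← h0τ]; exact h0
    · have hpsd : (S τ).PosSemidef := by
        refine Matrix.posSemidef_iff_dotProduct_mulVec.mpr ⟨hherm τ hτmem, fun x => ?_⟩
        have hqc : Continuous fun M : Matrix (Fin n) (Fin n) ℝ => star x ⬝ᵥ M.mulVec x := by
          simp only [dotProduct, Matrix.mulVec]
          exact continuous_finset_sum _ fun i _ => continuous_const.mul
            (continuous_finset_sum _ fun j _ =>
              (continuous_id.matrix_elem i j).mul continuous_const)
        have hq : ContinuousAt (fun s => star x ⬝ᵥ (S s).mulVec x) τ :=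
          hqc.continuousAt.comp hMc
        have hev : ∀ᶠ s in nhdsWithin τ (Set.Iio τ), 0 ≤ star x ⬝ᵥ (S s).mulVec x := by
          filter_upwards [Ioo_mem_nhdsLT_of_mem
            (⟨h0τ, le_refl τ⟩ : τ ∈ Set.Ioc (0:ℝ) τ)] with s hs
          exact ((hbelow s hs.1.le hs.2).posSemidef).dotProduct_mulVec_nonneg x
        exact ge_of_tendsto (hq.tendsto.mono_left nhdsWithin_le_nhds) hev
      have hdetpos : (0:ℝ) < (S τ).det := by
        set E := fun s : ℝ => Real.exp ((2*c)*s) with hEdef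
        have hEpos : ∀ s, 0 < E s := fun s => Real.exp_pos _
        have hu : ∀ s ∈ Set.Icc (0:ℝ) τ, HasDerivAt (fun r => (S r).det * E r)
            ((Matrix.adjugate (S s) * (F s * S s + S s * (F s)ᵀ + Q s)).trace * E s
              + (S s).det * (E s * (2*c))) s := by
          intro s hs
          have hsT : s ∈ Set.Icc (0:ℝ) T := ⟨hs.1, hs.2.trans hτT⟩
          have h1 : HasDerivAt (fun r : ℝ => (2*c)*r) (2*c) s := by
            simpa using (hasDerivAt_id s).const_mul (2*c)
          exact (hd s hsT).mul h1.exp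
        have hmono : MonotoneOn (fun r => (S r).det * E r) (Set.Icc 0 τ) := by
          apply monotoneOn_of_deriv_nonneg (convex_Icc 0 τ)
          · exact fun s hs => ((hu s hs).continuousAt).continuousWithinAt
          · intro s hs
            rw [interior_Icc] at hs
            exact ((hu s ⟨hs.1.le, hs.2.le⟩).differentiableAt).differentiableWithinAt
          · intro s hs
            rw [interior_Icc] at hs
            have hsIcc : s ∈ Set.Icc (0:ℝ) τ := ⟨hs.1.le, hs.2.le⟩
            have hsT : s ∈ Set.Icc (0:ℝ) T := ⟨hs.1.le, hsIcc.2.trans hτT⟩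
            rw [(hu s hsIcc).deriv]
            have hPD : (S s).PosDef := hbelow s hs.1.le hs.2
            have hdet : 0 < (S s).det := hPD.det_pos
            have htr := abs_le.mp (hc s hsT)
            have hQ0 : 0 ≤ (Matrix.adjugate (S s) * Q s).trace :=
              trace_adj_psd hPD (hQ s hsT)
            rw [trace_expand]
            have hE' := hEpos s
            nlinarith [hE', hdet, htr.1, htr.2, hQ0,
              mul_pos hE' hdet]
        have hle := hmono (Set.mem_Icc.mpr ⟨le_refl 0, hτ0⟩)
          (Set.mem_Icc.mpr ⟨hτ0, le_refl τ⟩) hτ0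
        have hE0 : E 0 = 1 := by simp [hEdef]
        have hd0 : 0 < (S 0).det := h0.det_pos
        have hle' : (S 0).det * E 0 ≤ (S τ).det * E τ := hle
        rw [hE0, mul_one] at hle'
        nlinarith [hEpos τ, hle', hd0]
      exact psd_posdef_of_det hpsd hdetpos.ne'
  have hτG : τ ∈ G := by
    refine ⟨hτmem, fun s hs => ?_⟩
    rcases lt_or_eq_of_le hs.2 with h | h
    · exact hbelow s hs.1 h
    · rwa [h]
  have hτeqT : τ = T := by
    by_contra hne
    have hτlt : τ < T := lt_of_le_of_ne hτT hne
    obtain ⟨ε, hεpos, hεq⟩ := quad_lower_bound hτPD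
    have hgc : Continuous fun M : Matrix (Fin n) (Fin n) ℝ => ∑ i, ∑ j, |M i j - S τ i j| := by
      refine continuous_finset_sum _ fun i _ => continuous_finset_sum _ fun j _ => ?_
      exact ((continuous_id.matrix_elem i j).sub continuous_const).abs
    have hfc : ContinuousAt (fun s => ∑ i, ∑ j, |S s i j - S τ i j|) τ :=
      hgc.continuousAt.comp hMc
    have hev : ∀ᶠ s in nhds τ, (∑ i, ∑ j, |S s i j - S τ i j|) < ε := by
      have h2 : Set.Iio ε ∈ nhds ((fun s => ∑ i, ∑ j, |S s i j - S τ i j|) τ) := by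
        have hf0 : (fun s => ∑ i, ∑ j, |S s i j - S τ i j|) τ = 0 := by simp
        rw [hf0]
        exact Iio_mem_nhds hεpos
      exact hfc h2
    obtain ⟨δ, hδpos, hδ⟩ := Metric.eventually_nhds_iff.mp hev
    set t₁ := min (τ + δ/2) T with ht₁def
    have hτt₁ : τ < t₁ := lt_min (by linarith) hτlt
    have ht₁G : t₁ ∈ G := by
      refine ⟨⟨le_trans hτ0 hτt₁.le, min_le_right _ _⟩, fun s hs => ?_⟩
      rcases le_or_gt s τ with hsle | hslt
      · exact hτG.2 s ⟨hs.1, hsle⟩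
      · have hsT : s ∈ Set.Icc (0:ℝ) T := ⟨hs.1, hs.2.trans (min_le_right _ _)⟩
        have hdist : dist s τ < δ := by
          rw [Real.dist_eq, abs_of_pos (by linarith : 0 < s - τ)]
          have hle2 : s ≤ τ + δ/2 := hs.2.trans (min_le_left _ _)
          linarith
        exact posDef_of_perturb (hSsym s hsT) hεq (hδ hdist)
    have hcon := le_csSup hGbdd ht₁G
    linarith
  exact hτG.2 t ⟨ht.1, by rw [hτeqT]; exact ht.2⟩
end

section
/- Let A ∈ ℝ^{n×n} and B ∈ ℝ^{n×m} with (A,B) a controllable pair, let Σ be a symmetric positive definite n×n matrix, and suppose X ∈ ℝ^{n×m} satisfies AΣ + ΣAᵀ + BXᵀ + XBᵀ = 0. Then, setting K := (1/2)BᵀΣ⁻¹ − XᵀΣ⁻¹, one has (A − BK)Σ + Σ(A − BK)ᵀ + BBᵀ = 0, and A − BK is Hurwitz. -/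
open Matrix

set_option maxHeartbeats 1000000

/-- A real matrix of full row rank has no nonzero left-kernel vector. -/
lemma fullRowRank_vecMul {n : ℕ} {k : Type} [Fintype k] (M : Matrix (Fin n) k ℝ)
    (h : M.rank = n) (v : Fin n → ℝ) (hv : v ᵥ* M = 0) : v = 0 := by
  have ht : (Mᵀ).rank = n := by rw [Matrix.rank_transpose]; exact h
  have hker : LinearMap.ker (Mᵀ).mulVecLin = ⊥ := by
    have h1 := (Mᵀ).mulVecLin.finrank_range_add_finrank_ker
    rw [Matrix.rank] at ht
    rw [ht] at h1
    have h2 : Module.finrank ℝ (Fin n → ℝ) = n := by simp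
    rw [h2] at h1
    have h3 : Module.finrank ℝ (LinearMap.ker (Mᵀ).mulVecLin) = 0 := by omega
    exact Submodule.finrank_eq_zero.mp h3
  have hmem : (Mᵀ).mulVecLin v = 0 := by
    simp [Matrix.mulVecLin_apply, Matrix.mulVec_transpose, hv]
  simpa using LinearMap.ker_eq_bot.mp hker (by simpa [Matrix.mulVecLin_apply] using hmem)

/-- Every spectral value of a complex matrix admits a left eigenvector. -/
lemma eig_exists {n : ℕ} (F : Matrix (Fin n) (Fin n) ℂ) {μ : ℂ} (hμ : μ ∈ spectrum ℂ F) :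
    ∃ v : Fin n → ℂ, v ≠ 0 ∧ v ᵥ* F = μ • v := by
  rw [spectrum.mem_iff] at hμ
  rw [Matrix.isUnit_iff_isUnit_det, isUnit_iff_ne_zero, not_not] at hμ
  obtain ⟨v, hv0, hv⟩ := Matrix.exists_vecMul_eq_zero_iff.mpr hμ
  refine ⟨v, hv0, ?_⟩
  rw [Matrix.vecMul_sub, sub_eq_zero] at hv
  rw [← hv, Matrix.algebraMap_eq_diagonal]
  ext j
  simp [Matrix.vecMul_diagonal, mul_comm]

lemma cmap_mulVec_star {a b : ℕ} (M : Matrix (Fin a) (Fin b) ℝ) (v : Fin b → ℂ) :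
    M.map (algebraMap ℝ ℂ) *ᵥ star v = star (M.map (algebraMap ℝ ℂ) *ᵥ v) := by
  ext i
  simp [mulVec, dotProduct, Complex.conj_ofReal, map_sum]

/-- The complexified quadratic form of a real positive definite matrix has positive
real part on nonzero vectors. -/
lemma quad_re_pos {k : ℕ} {S : Matrix (Fin k) (Fin k) ℝ} (hS : S.PosDef)
    (v : Fin k → ℂ) (hv : v ≠ 0) : 0 < (v ⬝ᵥ (S.map (algebraMap ℝ ℂ) *ᵥ star v)).re := by
  set x : Fin k → ℝ := fun i => (v i).re with hx
  set y : Fin k → ℝ := fun i => (v i).im with hy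
  have key : (v ⬝ᵥ (S.map (algebraMap ℝ ℂ) *ᵥ star v)).re = x ⬝ᵥ (S *ᵥ x) + y ⬝ᵥ (S *ᵥ y) := by
    simp only [dotProduct, mulVec, Matrix.map_apply, Finset.mul_sum, ← Finset.sum_add_distrib]
    rw [Complex.re_sum]
    refine Finset.sum_congr rfl fun i _ => ?_
    rw [Complex.re_sum]
    refine Finset.sum_congr rfl fun j _ => ?_
    simp [Complex.mul_re, Complex.mul_im, Complex.conj_ofReal, hx, hy]
  rw [key]
  have hxy : x ≠ 0 ∨ y ≠ 0 := by
    by_contra h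
    push_neg at h
    apply hv
    ext i
    have h1 := congrFun h.1 i
    have h2 := congrFun h.2 i
    simp [hx, hy] at h1 h2
    simp [Complex.ext_iff, h1, h2]
  rcases hxy with h | h
  · have h1 := hS.dotProduct_mulVec_pos h
    have h2 := hS.posSemidef.dotProduct_mulVec_nonneg y
    simp only [star_trivial] at h1 h2
    linarith
  · have h1 := hS.dotProduct_mulVec_pos h
    have h2 := hS.posSemidef.dotProduct_mulVec_nonneg x
    simp only [star_trivial] at h1 h2
    linarith

/-- If `(A,B)` is controllable then no nonzero left eigenvector of `A` lies in the
left kernel of `B` (over `ℂ`). -/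
lemma ctrb_no_left_eig {n m : ℕ} {A : Matrix (Fin n) (Fin n) ℝ} {B : Matrix (Fin n) (Fin m) ℝ}
    (hAB : IsControllablePair A B) (μ : ℂ) (v : Fin n → ℂ) (hv : v ≠ 0)
    (hA : v ᵥ* (A.map (algebraMap ℝ ℂ)) = μ • v)
    (hB : v ᵥ* (B.map (algebraMap ℝ ℂ)) = 0) : False := by
  have hpow : ∀ k : ℕ, v ᵥ* ((A ^ k).map (algebraMap ℝ ℂ)) = (μ ^ k) • v := by
    intro k
    induction k with
    | zero => simp [Matrix.vecMul_one]
    | succ k ih =>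
      have hmap : ((A ^ (k+1)).map (algebraMap ℝ ℂ))
          = (A ^ k).map (algebraMap ℝ ℂ) * A.map (algebraMap ℝ ℂ) := by
        rw [pow_succ, Matrix.map_mul]
      rw [hmap, ← Matrix.vecMul_vecMul, ih, Matrix.smul_vecMul, hA, smul_smul, pow_succ]
  have hall : ∀ p : Fin n × Fin m, (v ᵥ* ((ctrbMatrix A B).map (algebraMap ℝ ℂ))) p = 0 := by
    intro p
    have h1 : (v ᵥ* ((ctrbMatrix A B).map (algebraMap ℝ ℂ))) p
        = (v ᵥ* (((A ^ (p.1 : ℕ)) * B).map (algebraMap ℝ ℂ))) p.2 := by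
      simp [vecMul, dotProduct, ctrbMatrix, Matrix.map_apply]
    rw [h1, Matrix.map_mul, ← Matrix.vecMul_vecMul, hpow, Matrix.smul_vecMul, hB]
    simp
  have hcol : ∀ p : Fin n × Fin m, ∑ i, v i * ((ctrbMatrix A B) i p : ℂ) = 0 := by
    intro p
    have := hall p
    simpa [vecMul, dotProduct, Matrix.map_apply] using this
  have hre : (fun i => (v i).re) ᵥ* ctrbMatrix A B = 0 := by
    ext p
    have h := congrArg Complex.re (hcol p)
    rw [Complex.re_sum] at h
    simp only [Complex.mul_re, Complex.ofReal_re, Complex.ofReal_im, mul_zero, sub_zero,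
      Complex.zero_re] at h
    simpa [vecMul, dotProduct] using h
  have him : (fun i => (v i).im) ᵥ* ctrbMatrix A B = 0 := by
    ext p
    have h := congrArg Complex.im (hcol p)
    rw [Complex.im_sum] at h
    simp only [Complex.mul_im, Complex.ofReal_re, Complex.ofReal_im, mul_zero, zero_add,
      Complex.zero_im] at h
    simpa [vecMul, dotProduct] using h
  have hrank : (ctrbMatrix A B).rank = n := hAB
  have h1 := fullRowRank_vecMul _ hrank _ hre
  have h2 := fullRowRank_vecMul _ hrank _ him
  apply hv
  ext i
  have e1 := congrFun h1 i
  have e2 := congrFun h2 i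
  simp only [Pi.zero_apply] at e1 e2
  simp [Complex.ext_iff, e1, e2]

/-- if `(A,B)` is controllable, `Σ ≻ 0` and
`AΣ + ΣAᵀ + BXᵀ + XBᵀ = 0`, then `K := (1/2)BᵀΣ⁻¹ − XᵀΣ⁻¹` satisfies
`(A−BK)Σ + Σ(A−BK)ᵀ + BBᵀ = 0` and `A−BK` is Hurwitz. -/
theorem stmt9 {n m : ℕ} (A : Matrix (Fin n) (Fin n) ℝ) (B : Matrix (Fin n) (Fin m) ℝ)
    (hAB : IsControllablePair A B)
    (S : Matrix (Fin n) (Fin n) ℝ) (hS : S.PosDef)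
    (X : Matrix (Fin n) (Fin m) ℝ)
    (hX : A * S + S * Aᵀ + B * Xᵀ + X * Bᵀ = 0) :
    (A - B * ((1/2 : ℝ) • (Bᵀ * S⁻¹) - Xᵀ * S⁻¹)) * S
      + S * (A - B * ((1/2 : ℝ) • (Bᵀ * S⁻¹) - Xᵀ * S⁻¹))ᵀ + B * Bᵀ = 0 ∧
    IsHurwitz (A - B * ((1/2 : ℝ) • (Bᵀ * S⁻¹) - Xᵀ * S⁻¹)) := by
  set F : Matrix (Fin n) (Fin n) ℝ := A - B * ((1/2 : ℝ) • (Bᵀ * S⁻¹) - Xᵀ * S⁻¹) with hF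
  have hdet : IsUnit S.det := isUnit_iff_ne_zero.2 hS.det_pos.ne'
  have h1 : S⁻¹ * S = 1 := Matrix.nonsing_inv_mul S hdet
  have hsymm : Sᵀ = S := hS.1
  have h2 : S * S⁻¹ᵀ = 1 := by
    rw [Matrix.transpose_nonsing_inv, hsymm, Matrix.mul_nonsing_inv S hdet]
  have hKS : ((1/2 : ℝ) • (Bᵀ * S⁻¹) - Xᵀ * S⁻¹) * S = (1/2:ℝ) • Bᵀ - Xᵀ := by
    rw [Matrix.sub_mul, Matrix.smul_mul, Matrix.mul_assoc, h1, Matrix.mul_assoc, h1,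
      Matrix.mul_one, Matrix.mul_one]
  have hSK : S * ((1/2 : ℝ) • (Bᵀ * S⁻¹) - Xᵀ * S⁻¹)ᵀ = (1/2:ℝ) • B - X := by
    rw [transpose_sub, transpose_smul, transpose_mul, transpose_mul, transpose_transpose,
      transpose_transpose, Matrix.mul_sub, Matrix.mul_smul, ← Matrix.mul_assoc, h2,
      ← Matrix.mul_assoc, h2, Matrix.one_mul, Matrix.one_mul]
  have part1 : F * S + S * Fᵀ + B * Bᵀ = 0 := by
    rw [hF, Matrix.sub_mul, Matrix.mul_assoc B, hKS, transpose_sub, transpose_mul,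
      Matrix.mul_sub S, ← Matrix.mul_assoc S, hSK]
    rw [Matrix.mul_sub B, Matrix.sub_mul _ _ Bᵀ, Matrix.mul_smul B, Matrix.smul_mul]
    linear_combination (norm := module) hX
  refine ⟨part1, ?_⟩
  intro μ hμ
  -- complexified matrices
  set Fc : Matrix (Fin n) (Fin n) ℂ := F.map (algebraMap ℝ ℂ) with hFc
  set Sc : Matrix (Fin n) (Fin n) ℂ := S.map (algebraMap ℝ ℂ) with hSc
  set Bc : Matrix (Fin n) (Fin m) ℂ := B.map (algebraMap ℝ ℂ) with hBc
  have hC : Fc * Sc + Sc * Fcᵀ + Bc * Bcᵀ = 0 := by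
    have h0 : ((F * S) + (S * Fᵀ) + (B * Bᵀ)).map (algebraMap ℝ ℂ) = 0 := by
      rw [part1]; ext i j; simp
    rw [Matrix.map_add _ (fun a b => map_add _ a b), Matrix.map_add _ (fun a b => map_add _ a b),
      Matrix.map_mul, Matrix.map_mul, Matrix.map_mul, Matrix.transpose_map,
      Matrix.transpose_map] at h0
    exact h0
  obtain ⟨v, hv0, hvF⟩ := eig_exists Fc hμ
  set w : Fin n → ℂ := star v with hw
  have hFTw : Fcᵀ *ᵥ w = (starRingEnd ℂ) μ • w := by
    have hmap : Fcᵀ = Fᵀ.map (algebraMap ℝ ℂ) := by rw [hFc, Matrix.transpose_map]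
    have hterm : Fᵀ.map (algebraMap ℝ ℂ) *ᵥ v = μ • v := by
      rw [Matrix.transpose_map, Matrix.mulVec_transpose]
      exact hvF
    rw [hmap, hw, cmap_mulVec_star, hterm, star_smul]
    rfl
  set u : Fin m → ℂ := v ᵥ* Bc with hu
  set p : ℂ := v ⬝ᵥ (Sc *ᵥ w) with hp
  have t1 : v ⬝ᵥ ((Fc * Sc) *ᵥ w) = μ * p := by
    rw [← Matrix.mulVec_mulVec, Matrix.dotProduct_mulVec, hvF, smul_dotProduct, hp]
    rw [Matrix.dotProduct_mulVec]
    simp [smul_eq_mul]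
  have t2 : v ⬝ᵥ ((Sc * Fcᵀ) *ᵥ w) = (starRingEnd ℂ) μ * p := by
    rw [← Matrix.mulVec_mulVec, hFTw, Matrix.mulVec_smul, dotProduct_smul, hp,
      smul_eq_mul]
  have t3 : v ⬝ᵥ ((Bc * Bcᵀ) *ᵥ w) = u ⬝ᵥ star u := by
    rw [← Matrix.mulVec_mulVec, Matrix.dotProduct_mulVec]
    have hmap : Bcᵀ = Bᵀ.map (algebraMap ℝ ℂ) := by rw [hBc, Matrix.transpose_map]
    have : Bcᵀ *ᵥ w = star u := by
      rw [hmap, hw, cmap_mulVec_star, ← hmap]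
      rw [Matrix.mulVec_transpose, ← hu]
    rw [this, hu]
  have hq : μ * p + (starRingEnd ℂ) μ * p + u ⬝ᵥ star u = 0 := by
    have h0 : v ⬝ᵥ ((Fc * Sc + Sc * Fcᵀ + Bc * Bcᵀ) *ᵥ w) = 0 := by
      rw [hC]; simp
    rw [Matrix.add_mulVec, Matrix.add_mulVec, dotProduct_add, dotProduct_add, t1, t2, t3] at h0
    exact h0
  have hqre : (u ⬝ᵥ star u).re = ∑ j, Complex.normSq (u j) := by
    rw [dotProduct, Complex.re_sum]
    refine Finset.sum_congr rfl fun j _ => ?_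
    simp [Complex.mul_conj]
  have hppos : 0 < p.re := by
    rw [hp, hw]
    exact quad_re_pos hS v hv0
  have hune : u ≠ 0 := by
    intro h
    have hvA : v ᵥ* (A.map (algebraMap ℝ ℂ)) = μ • v := by
      have hFAB : Fc = A.map (algebraMap ℝ ℂ)
          - Bc * (((1/2 : ℝ) • (Bᵀ * S⁻¹) - Xᵀ * S⁻¹).map (algebraMap ℝ ℂ)) := by
        rw [hFc, hF, Matrix.map_sub _ (fun a b => map_sub _ a b), Matrix.map_mul]
      rw [hFAB, Matrix.vecMul_sub, ← Matrix.vecMul_vecMul, ← hu, h] at hvF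
      rw [← hvF]
      simp [Matrix.zero_vecMul]
    exact ctrb_no_left_eig hAB μ v hv0 hvA (by rw [← hBc, ← hu]; exact h)
  have hqpos : 0 < (u ⬝ᵥ star u).re := by
    rw [hqre]
    obtain ⟨j, hj⟩ := Function.ne_iff.mp hune
    refine Finset.sum_pos' (fun i _ => Complex.normSq_nonneg _) ⟨j, Finset.mem_univ j, ?_⟩
    exact Complex.normSq_pos.mpr hj
  have heq := congrArg Complex.re hq
  simp only [Complex.add_re, Complex.mul_re, Complex.conj_re, Complex.conj_im,
    Complex.zero_re, neg_mul, sub_neg_eq_add] at heq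
  by_contra hcon
  push_neg at hcon
  nlinarith [mul_nonneg hcon hppos.le]
end
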